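/- Let A be an abelian symmetric monoidal category with exact-in-each-variable tensor on flat objects, and let H : A → A' be an exact strong monoidal functor to a nonzero abelian monoidal category A' whose only Serre ⊗-ideals are 0 and A'. If E ∈ A is an object with H(E) ⊗-flat in A' and if there exists M ∈ A with E ⊗ M = 0 but H(M) ≠ 0, then H(E) = 0. -/

import Mathlib

open CategoryTheory CategoryTheory.Limits CategoryTheory.MonoidalCategory
  CategoryTheory.Pretriangulated

namespace Balmer

universe w v u v₂ u₂ v₃ u₃ v₄ u₄

variable {C : Type u} [Category.{v} C]

/-- An object is finitely presented if its coYoneda functor preserves filtered colimits. -/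
def IsFP (X : C) : Prop :=
  ∀ (J : Type v) [SmallCategory J] [IsFiltered J],
    Nonempty (PreservesColimitsOfShape J (coyoneda.obj (Opposite.op X)))

section Monoidal
variable [MonoidalCategory C]

/-- `n`-fold tensor power of an object. -/
def tpow (x : C) : ℕ → C
  | 0 => 𝟙_ C
  | n + 1 => x ⊗ tpow x n

/-- `n`-fold tensor power of a morphism. -/
def tpowHom {x y : C} (f : x ⟶ y) : ∀ n, tpow x n ⟶ tpow y n
  | 0 => 𝟙 _
  | n + 1 => f ⊗ₘ tpowHom f n

/-- `n`-fold tensor power of a morphism out of the unit, as a morphism out of the unit. -/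
def upow {z : C} (g : 𝟙_ C ⟶ z) : ∀ n, 𝟙_ C ⟶ tpow z n
  | 0 => 𝟙 _
  | n + 1 => (λ_ (𝟙_ C)).inv ≫ (g ⊗ₘ upow g n)

/-- A ⊗-multiplicative class of objects: contains the unit and is closed under `⊗`. -/
def IsTensorMultiplicative (S : Set C) : Prop :=
  𝟙_ C ∈ S ∧ ∀ ⦃a⦄, a ∈ S → ∀ ⦃b⦄, b ∈ S → (a ⊗ b) ∈ S

end Monoidal

section SerrePlain
variable [Abelian C]

/-- A Serre subcategory (as a class of objects): contains the zeros and is closed under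
subobjects, quotients and extensions. -/
def IsSerre (B : Set C) : Prop :=
  (∀ X : C, IsZero X → X ∈ B) ∧
  (∀ ⦃X Y : C⦄ (i : X ⟶ Y), Mono i → Y ∈ B → X ∈ B) ∧
  (∀ ⦃X Y : C⦄ (p : X ⟶ Y), Epi p → X ∈ B → Y ∈ B) ∧
  (∀ S : ShortComplex C, S.ShortExact → S.X₁ ∈ B → S.X₃ ∈ B → S.X₂ ∈ B)

end SerrePlain

section SerrePlain2
variable [Abelian C]

/-- A Serre subcategory closed under (small) coproducts (no tensor). -/
def IsLocalizingSub (L : Set C) : Prop :=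
  IsSerre L ∧ ∀ (J : Type v) (g : J → C) [HasCoproduct g], (∀ j, g j ∈ L) → (∐ g) ∈ L

/-- The localizing subcategory generated by a class of objects (no tensor). -/
def LocSubGen (S : Set C) : Set C :=
  {M | ∀ L : Set C, IsLocalizingSub L → S ⊆ L → M ∈ L}

end SerrePlain2

section Serre
variable [Abelian C] [MonoidalCategory C]

/-- A Serre ⊗-ideal: a Serre subcategory closed under tensoring with arbitrary objects. -/
def IsSerreTensorIdeal (B : Set C) : Prop :=
  IsSerre B ∧ ∀ (X : C) ⦃M : C⦄, M ∈ B → (X ⊗ M) ∈ B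

/-- A maximal proper Serre ⊗-ideal. -/
def IsMaxSerreTensorIdeal (B : Set C) : Prop :=
  IsSerreTensorIdeal B ∧ 𝟙_ C ∉ B ∧
    ∀ B' : Set C, IsSerreTensorIdeal B' → 𝟙_ C ∉ B' → B ⊆ B' → B' = B

/-- The Serre ⊗-ideal generated by a class of objects. -/
def SerreTensorGen (S : Set C) : Set C :=
  {M | ∀ L : Set C, IsSerreTensorIdeal L → S ⊆ L → M ∈ L}

/-- A localizing ⊗-ideal: a Serre ⊗-ideal closed under (small) coproducts. -/
def IsLocalizingTensorIdeal (L : Set C) : Prop :=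
  IsSerreTensorIdeal L ∧
    ∀ (J : Type v) (g : J → C) [HasCoproduct g], (∀ j, g j ∈ L) → (∐ g) ∈ L

/-- The localizing ⊗-ideal generated by a class of objects. -/
def LocTensorGen (S : Set C) : Set C :=
  {M | ∀ L : Set C, IsLocalizingTensorIdeal L → S ⊆ L → M ∈ L}

/-- A Serre ⊗-ideal of the full (abelian, monoidal) subcategory of objects in `P`
(e.g. `P` = finitely presented objects). -/
def IsSerreTensorIdealIn (P B : Set C) : Prop :=
  B ⊆ P ∧
  (∀ X : C, IsZero X → X ∈ P → X ∈ B) ∧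
  (∀ ⦃X Y : C⦄ (i : X ⟶ Y), Mono i → X ∈ P → Y ∈ B → X ∈ B) ∧
  (∀ ⦃X Y : C⦄ (p : X ⟶ Y), Epi p → Y ∈ P → X ∈ B → Y ∈ B) ∧
  (∀ S : ShortComplex C, S.ShortExact → S.X₂ ∈ P → S.X₁ ∈ B → S.X₃ ∈ B → S.X₂ ∈ B) ∧
  (∀ ⦃X : C⦄, X ∈ P → ∀ ⦃M : C⦄, M ∈ B → (X ⊗ M) ∈ B)

/-- A maximal proper Serre ⊗-ideal of the full subcategory of objects in `P`. -/
def IsMaxSerreTensorIdealIn (P B : Set C) : Prop :=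
  IsSerreTensorIdealIn P B ∧ 𝟙_ C ∉ B ∧
    ∀ B' : Set C, IsSerreTensorIdealIn P B' → 𝟙_ C ∉ B' → B ⊆ B' → B' = B

end Serre

section Tri
variable [Preadditive C] [HasZeroObject C] [HasShift C ℤ]
  [∀ n : ℤ, (shiftFunctor C n).Additive] [Pretriangulated C] [MonoidalCategory C]

/-- A thick ⊗-ideal of a tensor-triangulated category. -/
def IsThickTensorIdeal (P : Set C) : Prop :=
  (∀ ⦃x y : C⦄, (x ≅ y) → x ∈ P → y ∈ P) ∧
  (∀ (x : C) (n : ℤ), x ∈ P → (shiftFunctor C n).obj x ∈ P) ∧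
  (∀ T : Triangle C, T ∈ (distTriang C) → T.obj₁ ∈ P → T.obj₂ ∈ P → T.obj₃ ∈ P) ∧
  (∀ x y : C, (∃ (i : x ⟶ y) (r : y ⟶ x), i ≫ r = 𝟙 x) → y ∈ P → x ∈ P) ∧
  (∀ (x : C) ⦃y : C⦄, y ∈ P → (x ⊗ y) ∈ P)

/-- A prime thick ⊗-ideal. -/
def IsPrimeThickTensorIdeal (P : Set C) : Prop :=
  IsThickTensorIdeal P ∧ (∃ x : C, x ∉ P) ∧
    ∀ x y : C, (x ⊗ y) ∈ P → x ∈ P ∨ y ∈ P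

end Tri

/-- (Simplicity step in Balmer Thm 5.6.) Let `H : A ⥤ A'` be an exact
strong monoidal functor to a nonzero abelian monoidal category `A'` whose only Serre
⊗-ideals are `0` and `A'`. If `E ∈ A` has `H(E)` ⊗-flat and there exists `M` with
`E ⊗ M = 0` but `H(M) ≠ 0`, then `H(E) = 0`. -/
theorem stmt19 {A : Type u} [Category.{v} A] [Abelian A] [MonoidalCategory A]
    [SymmetricCategory A] [MonoidalPreadditive A]
    {A' : Type u₂} [Category.{v₂} A'] [Abelian A'] [MonoidalCategory A']
    [SymmetricCategory A'] [MonoidalPreadditive A']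
    [∀ X : A', PreservesFiniteColimits (tensorLeft X)]
    (H : A ⥤ A') [H.Monoidal] [PreservesFiniteLimits H] [PreservesFiniteColimits H]
    (hnz : ∃ X : A', ¬ IsZero X)
    (hsimple : ∀ C : Set A', IsSerreTensorIdeal C → C = {X : A' | IsZero X} ∨ C = Set.univ)
    (E : A) (hflat : PreservesFiniteLimits (tensorLeft (H.obj E)))
    (M : A) (hM : IsZero (E ⊗ M)) (hM' : ¬ IsZero (H.obj M)) :
    IsZero (H.obj E) := by
  -- the kernel of tensoring with H(E)
  set S : Set A' := {X : A' | IsZero (H.obj E ⊗ X)} with hS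
  have hzeropres : ∀ (Z : A') {X : A'}, IsZero X → IsZero (Z ⊗ X) := fun Z X hX =>
    (tensorLeft Z).map_isZero hX
  have hmono : ∀ {X Y : A'} (i : X ⟶ Y), Mono i → Mono (H.obj E ◁ i) := by
    intro X Y i hi
    exact preserves_mono_of_preservesLimit (tensorLeft (H.obj E)) i
  have hserre : IsSerreTensorIdeal S := by
    refine ⟨⟨fun X hX => hzeropres _ hX, ?_, ?_, ?_⟩, ?_⟩
    · intro X Y i hi hY
      have := hmono i hi
      exact IsZero.of_mono (H.obj E ◁ i) hY
    · intro X Y p hp hX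
      have : Epi (H.obj E ◁ p) := preserves_epi_of_preservesColimit (tensorLeft (H.obj E)) p
      exact IsZero.of_epi (H.obj E ◁ p) hX
    · intro T hT h1 h3
      have hT' := hT.map_of_exact (tensorLeft (H.obj E))
      have : (T.map (tensorLeft (H.obj E))).f = 0 := h1.eq_zero_of_src _
      have hm : Mono (T.map (tensorLeft (H.obj E))).g := hT'.exact.mono_g this
      exact @IsZero.of_mono _ _ _ _ _ (T.map (tensorLeft (H.obj E))).g hm h3
    · intro X N hN
      have : (H.obj E ⊗ X ⊗ N) ≅ X ⊗ (H.obj E ⊗ N) :=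
        (α_ _ _ _).symm ≪≫ (β_ (H.obj E) X ⊗ᵢ Iso.refl N) ≪≫ α_ _ _ _
      exact (hzeropres X hN).of_iso this
  -- H(M) ∈ S
  have hHM : H.obj M ∈ S := by
    have : (H.obj E ⊗ H.obj M) ≅ H.obj (E ⊗ M) := Functor.Monoidal.μIso H E M
    exact (H.map_isZero hM).of_iso this
  -- S is not the zero ideal, so S = univ
  rcases hsimple S hserre with h | h
  · exfalso
    rw [h] at hHM; exact hM' hHM
  · have hunit : 𝟙_ A' ∈ S := h ▸ Set.mem_univ _
    exact hunit.of_iso (ρ_ (H.obj E)).symm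

end Balmer
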